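/- arXiv:1302.2116 — 4 statements merged into one kernel-verified Lean document; each statement's English description precedes it below -/
import Mathlib

section
/- The composition of two functions of skew-product type is of skew-product type: if (f_0,…,f_k) and (g_0,…,g_k) are skew-product tuples with f_i : ∏_{j≤i} B_j^{[i]^(j)} → A_i and g_i : ∏_{j≤i} A_j^{[i]^(j)} → C_i, then ĝ ∘ f̂ is the function of skew-product type associated to the tuple h_i((x_a)_{a ⊆ [i]}) := g_i((f_{|a|}((x_b)_{b ⊆ a}))_{a ⊆ [i]}). -/
universe u

/-- Restrict an assignment `x` of a value in `B |e|` to each subset `e ⊆ [k]` to the subsets of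
a fixed `e`, reindexed along the order isomorphism `Fin e.card ≃o e`. -/
def restrictSub {B : ℕ → Type u} {k : ℕ} (x : ∀ e : Finset (Fin k), B e.card)
    (e : Finset (Fin k)) (a : Finset (Fin e.card)) : B a.card :=
  cast (congrArg B (Finset.card_map _)) (x (a.map (e.orderEmbOfFin rfl).toEmbedding))

/-- The function of skew-product type `f̂` associated to a skew-product tuple
`f_i : ∏_{j ≤ i} B_j^{[i]^(j)} → A_i`:  `f̂((x_e)_{e ⊆ [k]}) = (f_{|e|}((x_a)_{a ⊆ e}))_{e ⊆ [k]}`. -/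
def skewHat {B A : ℕ → Type u} {k : ℕ}
    (f : ∀ i : ℕ, (∀ a : Finset (Fin i), B a.card) → A i)
    (x : ∀ e : Finset (Fin k), B e.card) : ∀ e : Finset (Fin k), A e.card :=
  fun e => f e.card (restrictSub x e)

/-- A skew-product tuple is middle-symmetric if each `f_i` is invariant under the simultaneous
action of any permutation of `[i]` on all the coordinate indices. -/
def MidSymmetric {B : ℕ → Type u} {A : ℕ → Type u}
    (f : ∀ i : ℕ, (∀ a : Finset (Fin i), B a.card) → A i) : Prop :=
  ∀ (i : ℕ) (σ : Equiv.Perm (Fin i)) (x : ∀ a : Finset (Fin i), B a.card),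
    f i (fun a => cast (congrArg B (Finset.card_map _)) (x (a.map σ.toEmbedding))) = f i x



lemma cast_app {A B : ℕ → Type u} (f : ∀ i : ℕ, (∀ a : Finset (Fin i), B a.card) → A i)
    {m n : ℕ} (h : m = n) {y : ∀ a : Finset (Fin m), B a.card} {z : ∀ a : Finset (Fin n), B a.card}
    (hyz : HEq y z) : cast (congrArg A h) (f m y) = f n z := by
  subst h; cases hyz; rfl

lemma map_cast_refl {m : ℕ} (b : Finset (Fin m)) :
    b.map (Fin.castOrderIso rfl).toOrderEmbedding.toEmbedding = b := by
  have : (Fin.castOrderIso (rfl : m = m)).toOrderEmbedding.toEmbedding = Function.Embedding.refl _ :=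
    Function.Embedding.ext fun i => rfl
  rw [this, Finset.map_refl]

lemma pi_heq {B : ℕ → Type u} {m n : ℕ} (h : m = n)
    (y : ∀ b : Finset (Fin m), B b.card) (z : ∀ b : Finset (Fin n), B b.card)
    (hyz : ∀ b : Finset (Fin m),
      HEq (y b) (z (b.map (Fin.castOrderIso h).toOrderEmbedding.toEmbedding))) :
    HEq y z := by
  subst h
  apply heq_of_eq
  funext b
  have := hyz b
  rwa [map_cast_refl, ← heq_iff_eq] at *


/-- The composition of two functions of skew-product type is of skew-product type: if
`(f_0,…,f_k)` and `(g_0,…,g_k)` are middle-symmetric skew-product tuples, then `ĝ ∘ f̂` is the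
function of skew-product type associated to the tuple
`h_i((x_a)_{a ⊆ [i]}) := g_i((f_{|a|}((x_b)_{b ⊆ a}))_{a ⊆ [i]})`. -/
theorem skewHat_comp {B A C : ℕ → Type u} {k : ℕ}
    (f : ∀ i : ℕ, (∀ a : Finset (Fin i), B a.card) → A i)
    (g : ∀ i : ℕ, (∀ a : Finset (Fin i), A a.card) → C i)
    (hf : MidSymmetric f) (hg : MidSymmetric g) :
    (skewHat (k := k) g) ∘ (skewHat (k := k) f)
      = skewHat (k := k) (fun i x => g i (skewHat (k := i) f x)) := by
  funext x e
  show g e.card (restrictSub (skewHat f x) e) = g e.card (skewHat f (restrictSub x e))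
  congr 1
  funext a
  set ιe := e.orderEmbOfFin rfl with hιe
  set s : Finset (Fin k) := a.map ιe.toEmbedding with hs
  have hcard : s.card = a.card := Finset.card_map _
  show cast (congrArg A (Finset.card_map _)) (f s.card (restrictSub x s))
    = f a.card (restrictSub (restrictSub x e) a)
  apply cast_app f hcard
  apply pi_heq hcard
  intro b
  set ιa := a.orderEmbOfFin rfl with hιa
  set b' : Finset (Fin a.card) := b.map (Fin.castOrderIso hcard).toOrderEmbedding.toEmbedding
    with hb'
  -- key finset identity
  have key : b.map (s.orderEmbOfFin rfl).toEmbedding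
      = (b'.map ιa.toEmbedding).map ιe.toEmbedding := by
    rw [hb', Finset.map_map, Finset.map_map]
    congr 1
    have : ((Fin.castOrderIso hcard).toOrderEmbedding.trans (ιa.trans ιe))
        = s.orderEmbOfFin rfl := by
      apply Finset.orderEmbOfFin_unique'
      intro i
      show _ ∈ a.map ιe.toEmbedding
      rw [Finset.mem_map]
      exact ⟨ιa (Fin.cast hcard i), Finset.orderEmbOfFin_mem _ _ _, rfl⟩
    rw [← this]
    rfl
  show HEq (restrictSub x s b) (restrictSub (restrictSub x e) a b')
  unfold restrictSub
  refine (cast_heq _ _).trans (HEq.trans ?_ ((cast_heq _ _).trans (cast_heq _ _)).symm)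
  rw [Finset.map_map] at key ⊢
  exact congr_arg_heq x key
end

section
/- Noise-Outsourcing Lemma: let A and B be standard Borel spaces and (X,Y) an (A×B)-valued random variable. Then, possibly after enlarging the probability space, there exist a random variable U uniform on [0,1) independent of X and a Borel function f : A × [0,1) → B such that (X,Y) = (X, f(X,U)) almost surely. -/
open MeasureTheory ProbabilityTheory Set Filter Topology

noncomputable section NoiseAux

namespace NoiseAux

variable {A : Type*} [MeasurableSpace A]

/-- Quantile function associated to the conditional CDF of `ρ`. -/
def q (ρ : Measure (A × ℝ)) (a : A) (u : ℝ) : ℝ :=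
  if u ∈ Set.Ioo (0:ℝ) 1 then sInf {x | u ≤ condCDF ρ a x} else 0

lemma q_le_iff (ρ : Measure (A × ℝ)) [IsFiniteMeasure ρ] (a : A) {u x : ℝ}
    (hu : u ∈ Set.Ioo (0:ℝ) 1) : q ρ a u ≤ x ↔ u ≤ condCDF ρ a x := by
  set F := condCDF ρ a with hF
  have hmono : Monotone F := (condCDF ρ a).mono
  have hne : {x | u ≤ F x}.Nonempty := by
    obtain ⟨y, hy⟩ := ((tendsto_condCDF_atTop ρ a).eventually (eventually_ge_nhds hu.2)).exists
    exact ⟨y, hy⟩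
  have hbdd : BddBelow {x | u ≤ F x} := by
    obtain ⟨x₀, hx₀⟩ := eventually_atBot.mp
      ((tendsto_condCDF_atBot ρ a).eventually (eventually_lt_nhds hu.1))
    exact ⟨x₀, fun y hy => le_of_not_gt fun hlt => (hx₀ y hlt.le).not_ge hy⟩
  have hqeq : q ρ a u = sInf {x | u ≤ F x} := if_pos hu
  rw [hqeq]
  constructor
  · intro h
    have hstep : ∀ y ∈ Ioi (sInf {x | u ≤ F x}), u ≤ F y := by
      intro y hy
      obtain ⟨z, hz, hzy⟩ := exists_lt_of_csInf_lt hne hy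
      exact hz.trans (hmono hzy.le)
    have hq : u ≤ F (sInf {x | u ≤ F x}) :=
      ge_of_tendsto (((condCDF ρ a).right_continuous _).mono Ioi_subset_Ici_self)
        (eventually_nhdsWithin_of_forall hstep)
    exact hq.trans (hmono h)
  · intro h
    exact csInf_le hbdd h

lemma measurable_q (ρ : Measure (A × ℝ)) [IsFiniteMeasure ρ] :
    Measurable fun p : A × ℝ => q ρ p.1 p.2 := by
  refine measurable_of_Iic fun x => ?_
  have hset : (fun p : A × ℝ => q ρ p.1 p.2) ⁻¹' Iic x =
      ({p : A × ℝ | p.2 ∈ Ioo (0:ℝ) 1} ∩ {p : A × ℝ | p.2 ≤ condCDF ρ p.1 x}) ∪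
      ({p : A × ℝ | p.2 ∈ Ioo (0:ℝ) 1}ᶜ ∩ {_p : A × ℝ | (0:ℝ) ≤ x}) := by
    ext p
    by_cases hp : p.2 ∈ Ioo (0:ℝ) 1
    · simp only [mem_preimage, mem_Iic, mem_union, mem_inter_iff, mem_setOf_eq,
        mem_compl_iff, hp, true_and, not_true_eq_false, false_and, or_false]
      exact q_le_iff ρ p.1 hp
    · simp only [mem_preimage, mem_Iic, mem_union, mem_inter_iff, mem_setOf_eq,
        mem_compl_iff, hp, false_and, not_false_eq_true, true_and, false_or]
      rw [q, if_neg hp]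
  rw [hset]
  refine MeasurableSet.union (MeasurableSet.inter ?_ ?_) (MeasurableSet.inter ?_ ?_)
  · exact measurable_snd measurableSet_Ioo
  · exact measurableSet_le measurable_snd ((measurable_condCDF ρ x).comp measurable_fst)
  · exact (measurable_snd measurableSet_Ioo).compl
  · by_cases h : (0:ℝ) ≤ x <;> simp [h]

lemma measurable_q_left (ρ : Measure (A × ℝ)) [IsFiniteMeasure ρ] (a : A) :
    Measurable (q ρ a) :=
  (measurable_q ρ).comp measurable_prodMk_left

instance : IsProbabilityMeasure (volume.restrict (Set.Ico (0:ℝ) 1)) :=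
  ⟨by rw [Measure.restrict_apply_univ, Real.volume_Ico]; norm_num⟩

/-- Inverse transform sampling: mapping the uniform measure on `[0,1)` through the quantile
function of `condCDF ρ a` gives the measure with CDF `condCDF ρ a`. -/
lemma map_q (ρ : Measure (A × ℝ)) [IsFiniteMeasure ρ] (a : A) :
    (volume.restrict (Set.Ico (0:ℝ) 1)).map (q ρ a) = (condCDF ρ a).measure := by
  have hmeas : Measurable (q ρ a) := measurable_q_left ρ a
  haveI : IsProbabilityMeasure ((volume.restrict (Set.Ico (0:ℝ) 1)).map (q ρ a)) :=
    Measure.isProbabilityMeasure_map hmeas.aemeasurable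
  refine Measure.ext_of_Iic _ _ fun x => ?_
  rw [Measure.map_apply hmeas measurableSet_Iic, measure_condCDF_Iic,
    Measure.restrict_apply (hmeas measurableSet_Iic)]
  set F := condCDF ρ a with hF
  have h0 : 0 ≤ F x := condCDF_nonneg ρ a x
  have h1 : F x ≤ 1 := condCDF_le_one ρ a x
  have hsub1 : q ρ a ⁻¹' Iic x ∩ Ico (0:ℝ) 1 ⊆ (Ioo (0:ℝ) 1 ∩ Iic (F x)) ∪ {0} := by
    rintro u ⟨hu1, hu2⟩
    rcases eq_or_lt_of_le hu2.1 with h | h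
    · exact Or.inr (by simp [← h])
    · exact Or.inl ⟨⟨h, hu2.2⟩, (q_le_iff ρ a ⟨h, hu2.2⟩).mp hu1⟩
  have hsub2 : Ioo (0:ℝ) 1 ∩ Iic (F x) ⊆ q ρ a ⁻¹' Iic x ∩ Ico (0:ℝ) 1 := by
    rintro u ⟨hu1, hu2⟩
    exact ⟨(q_le_iff ρ a hu1).mpr hu2, ⟨hu1.1.le, hu1.2⟩⟩
  have hvol : volume (q ρ a ⁻¹' Iic x ∩ Ico (0:ℝ) 1) = volume (Ioo (0:ℝ) 1 ∩ Iic (F x)) := by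
    refine le_antisymm ?_ (measure_mono hsub2)
    calc volume (q ρ a ⁻¹' Iic x ∩ Ico (0:ℝ) 1)
        ≤ volume ((Ioo (0:ℝ) 1 ∩ Iic (F x)) ∪ {0}) := measure_mono hsub1
      _ ≤ volume (Ioo (0:ℝ) 1 ∩ Iic (F x)) + volume ({0} : Set ℝ) := measure_union_le _ _
      _ = volume (Ioo (0:ℝ) 1 ∩ Iic (F x)) := by simp
  rw [hvol]
  rcases lt_or_ge (F x) 1 with hc | hc
  · have : Ioo (0:ℝ) 1 ∩ Iic (F x) = Ioc 0 (F x) := by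
      ext u
      simp only [mem_inter_iff, mem_Ioo, mem_Iic, mem_Ioc]
      exact ⟨fun h => ⟨h.1.1, h.2⟩, fun h => ⟨⟨h.1, h.2.trans_lt hc⟩, h.2⟩⟩
    rw [this, Real.volume_Ioc, sub_zero]
  · have hFx : F x = 1 := le_antisymm h1 hc
    have : Ioo (0:ℝ) 1 ∩ Iic (F x) = Ioo 0 1 := by
      rw [hFx]
      exact inter_eq_left.mpr fun u hu => hu.2.le
    rw [this, Real.volume_Ioo, hFx]
    norm_num

/-- Disintegration of `ρ` by the measures associated to the conditional CDFs. -/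
lemma lintegral_condCDF_measure (ρ : Measure (A × ℝ)) [IsFiniteMeasure ρ] {s : Set (A × ℝ)}
    (hs : MeasurableSet s) :
    ∫⁻ a, (condCDF ρ a).measure {x | (a, x) ∈ s} ∂ρ.fst = ρ s := by
  have hck := isCondKernelCDF_condCDF ρ
  calc ∫⁻ a, (condCDF ρ a).measure {x | (a, x) ∈ s} ∂ρ.fst
      = (Kernel.const Unit ρ.fst ⊗ₖ hck.toKernel (fun p : Unit × A => condCDF ρ p.2)) () s := by
        rw [Kernel.compProd_apply hs]
        simp only [Kernel.const_apply]
        rfl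
    _ = ρ s := by rw [compProd_toKernel hck, Kernel.const_apply]

end NoiseAux

end NoiseAux

open NoiseAux

/-- Noise-Outsourcing Lemma: if `A` and `B` are standard Borel spaces and `(X,Y)` is an
`(A × B)`-valued random variable, then (possibly after enlarging the probability space) there
are a uniform-`[0,1)` random variable `U` independent of `X` and a Borel function
`f : A × [0,1) → B` such that `(X,Y) = (X, f(X,U))` almost surely.  The enlargement is
expressed by a new probability space carrying a copy `(X',Y')` of `(X,Y)`. -/
theorem noise_outsourcing {Ω A B : Type*} [MeasurableSpace Ω]
    [MeasurableSpace A] [StandardBorelSpace A]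
    [MeasurableSpace B] [StandardBorelSpace B] [Nonempty B]
    (P : Measure Ω) [IsProbabilityMeasure P]
    (X : Ω → A) (Y : Ω → B) (hX : Measurable X) (hY : Measurable Y) :
    ∃ (Ω' : Type) (_ : MeasurableSpace Ω') (P' : Measure Ω')
      (_ : IsProbabilityMeasure P')
      (X' : Ω' → A) (Y' : Ω' → B) (U : Ω' → ℝ) (f : A → ℝ → B),
      Measurable X' ∧ Measurable Y' ∧ Measurable U ∧
      Measurable (Function.uncurry f) ∧
      P'.map U = volume.restrict (Set.Ico (0:ℝ) 1) ∧
      IndepFun X' U P' ∧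
      P'.map (fun ω => (X' ω, Y' ω)) = P.map (fun ω => (X ω, Y ω)) ∧
      ∀ᵐ ω ∂P', Y' ω = f (X' ω) (U ω) := by
  classical
  haveI : Nonempty Ω := by
    by_contra h
    rw [not_nonempty_iff] at h
    have h1 := measure_univ (μ := P)
    rw [Set.univ_eq_empty_iff.mpr h] at h1
    simp at h1
  haveI : Nonempty A := ⟨X Classical.ofNonempty⟩
  -- embeddings of `A` and `B` into `ℝ`
  obtain ⟨e, he⟩ := exists_measurableEmbedding_real B
  obtain ⟨eA, heA⟩ := exists_measurableEmbedding_real A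
  set einv : ℝ → B := Function.extend e id fun _ => Classical.ofNonempty with heinv_def
  have heinv_meas : Measurable einv := he.measurable_extend measurable_id measurable_const
  have heinv_e : ∀ b, einv (e b) = b := fun b => he.injective.extend_apply _ _ b
  set einvA : ℝ → A := Function.extend eA id fun _ => Classical.ofNonempty with heinvA_def
  have heinvA_meas : Measurable einvA := heA.measurable_extend measurable_id measurable_const
  have heinvA_eA : ∀ a, einvA (eA a) = a := fun a => heA.injective.extend_apply _ _ a
  -- the joint law of `(X, e ∘ Y)` and its conditional CDFs
  set ρ : Measure (A × ℝ) := P.map fun ω => (X ω, e (Y ω)) with hρ_def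
  have hXY : Measurable fun ω => (X ω, e (Y ω)) := hX.prodMk (he.measurable.comp hY)
  haveI : IsProbabilityMeasure ρ := Measure.isProbabilityMeasure_map hXY.aemeasurable
  have hfst : ρ.fst = P.map X := by
    rw [hρ_def, Measure.fst, Measure.map_map measurable_fst hXY]
    rfl
  set m : Measure ℝ := volume.restrict (Set.Ico (0:ℝ) 1) with hm_def
  haveI : IsProbabilityMeasure (P.map X) := Measure.isProbabilityMeasure_map hX.aemeasurable
  haveI : IsProbabilityMeasure (P.map fun ω => eA (X ω)) :=
    Measure.isProbabilityMeasure_map ((heA.measurable.comp hX).aemeasurable)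
  set f : A → ℝ → B := fun a u => einv (q ρ a u) with hf_def
  have hq : Measurable fun p : A × ℝ => q ρ p.1 p.2 := measurable_q ρ
  have hfm : Measurable (Function.uncurry f) := heinv_meas.comp hq
  -- the new probability space
  set P' : Measure (ℝ × ℝ) := (P.map fun ω => eA (X ω)).prod m with hP'_def
  haveI : IsProbabilityMeasure P' := by rw [hP'_def]; infer_instance
  set X' : ℝ × ℝ → A := fun p => einvA p.1 with hX'_def
  set Y' : ℝ × ℝ → B := fun p => f (einvA p.1) p.2 with hY'_def
  have hX'm : Measurable X' := heinvA_meas.comp measurable_fst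
  have hY'm : Measurable Y' := hfm.comp (hX'm.prodMk measurable_snd)
  -- core law computation on `A × ℝ`
  have hg : Measurable fun p : A × ℝ => (p.1, f p.1 p.2) := measurable_fst.prodMk hfm
  have hcore : ((P.map X).prod m).map (fun p : A × ℝ => (p.1, f p.1 p.2)) =
      P.map fun ω => (X ω, Y ω) := by
    refine Measure.ext fun s hs => ?_
    rw [Measure.map_apply hg hs, Measure.prod_apply (hg hs)]
    set s' : Set (A × ℝ) := (fun p : A × ℝ => (p.1, einv p.2)) ⁻¹' s with hs'_def
    have hs' : MeasurableSet s' :=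
      (measurable_fst.prodMk (heinv_meas.comp measurable_snd)) hs
    have key : ∀ a : A, m (Prod.mk a ⁻¹' ((fun p : A × ℝ => (p.1, f p.1 p.2)) ⁻¹' s)) =
        (condCDF ρ a).measure (Prod.mk a ⁻¹' s') := by
      intro a
      have hqa : Measurable (q ρ a) := measurable_q_left ρ a
      have hpre : Prod.mk a ⁻¹' ((fun p : A × ℝ => (p.1, f p.1 p.2)) ⁻¹' s) =
          q ρ a ⁻¹' (Prod.mk a ⁻¹' s') := rfl
      rw [hpre, ← Measure.map_apply hqa (measurable_prodMk_left hs'), map_q ρ a]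
    simp_rw [key]
    have hint : ∫⁻ a, (condCDF ρ a).measure (Prod.mk a ⁻¹' s') ∂(P.map X) = ρ s' := by
      rw [← hfst]
      exact lintegral_condCDF_measure ρ hs'
    rw [hint, hρ_def, Measure.map_apply hXY hs', Measure.map_apply (hX.prodMk hY) hs]
    congr 1
    ext ω
    simp [hs'_def, heinv_e]
  -- transferring the product measure from `ℝ × ℝ` to `A × ℝ`
  have hPm : Measurable (Prod.map einvA (id : ℝ → ℝ)) := heinvA_meas.prodMap measurable_id
  have hmapA : (P.map fun ω => eA (X ω)).map einvA = P.map X := by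
    rw [Measure.map_map heinvA_meas (show Measurable fun ω => eA (X ω) from heA.measurable.comp hX)]
    congr 1
    funext ω
    exact heinvA_eA (X ω)
  have hprod : P'.map (Prod.map einvA (id : ℝ → ℝ)) = (P.map X).prod m := by
    rw [hP'_def, ← Measure.map_prod_map _ _ heinvA_meas measurable_id, hmapA, Measure.map_id]
  refine ⟨ℝ × ℝ, inferInstance, P', inferInstance, X', Y', Prod.snd, f,
    hX'm, hY'm, measurable_snd, hfm, ?_, ?_, ?_, ?_⟩
  · -- U is uniform
    rw [hP'_def, Measure.map_snd_prod, measure_univ, one_smul]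
  · -- independence
    have hbase : IndepFun (Prod.fst : ℝ × ℝ → ℝ) (Prod.snd : ℝ × ℝ → ℝ) P' := by
      rw [indepFun_iff_map_prod_eq_prod_map_map measurable_fst.aemeasurable
        measurable_snd.aemeasurable]
      have hid : (fun ω : ℝ × ℝ => (ω.1, ω.2)) = id := rfl
      rw [hid, Measure.map_id, hP'_def, Measure.map_fst_prod, Measure.map_snd_prod]
      simp [measure_univ]
    exact hbase.comp heinvA_meas measurable_id
  · -- the law of `(X', Y')`
    have hcomp : (fun ω : ℝ × ℝ => (X' ω, Y' ω)) =
        (fun p : A × ℝ => (p.1, f p.1 p.2)) ∘ Prod.map einvA (id : ℝ → ℝ) := rfl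
    rw [hcomp, ← Measure.map_map hg hPm, hprod, hcore]
  · -- almost sure equality (in fact everywhere)
    exact Filter.Eventually.of_forall fun ω => rfl
end

section
/- Factorization of measure-preserving skew-product maps (k = 0 case): if G_0 : [0,1) → [0,1) is a Borel map pushing Lebesgue measure to Lebesgue measure, then there exists a Borel map H_0 : [0,1)×[0,1) → [0,1) such that if (X,Y) are independent and uniform on [0,1), then H_0(X,Y) is uniform on [0,1) and G_0(H_0(X,Y)) = X almost surely. -/
open MeasureTheory

/-- The uniform probability measure on `[0,1) ⊆ ℝ`. -/
noncomputable def unif01 : Measure ℝ := volume.restrict (Set.Ico (0:ℝ) 1)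

open Set Filter ProbabilityTheory

instance : IsProbabilityMeasure unif01 :=
  ⟨by rw [unif01, Measure.restrict_apply_univ, Real.volume_Ico]; norm_num⟩

/-- The generalized inverse (quantile function) of the conditional CDF of `ρ`, as a jointly
measurable function of `(a, y)`; junk value `0` outside `y ∈ (0,1)`. -/
noncomputable def qH (ρ : Measure (ℝ × ℝ)) : ℝ × ℝ → ℝ :=
  fun p => if p.2 ∈ Set.Ioo (0:ℝ) 1 then sInf {z | p.2 ≤ condCDF ρ p.1 z} else 0

/-- Key property of the generalized inverse of the conditional CDF:
for `y ∈ (0,1)`, `sInf {z | y ≤ F z} ≤ x ↔ y ≤ F x`. -/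
lemma quantile_condCDF_le_iff (ρ : Measure (ℝ × ℝ)) (a : ℝ) {y : ℝ}
    (hy0 : 0 < y) (hy1 : y < 1) (x : ℝ) :
    sInf {z | y ≤ condCDF ρ a z} ≤ x ↔ y ≤ condCDF ρ a x := by
  set S : Set ℝ := {z | y ≤ condCDF ρ a z} with hS
  have hne : S.Nonempty := by
    obtain ⟨z, hz⟩ := ((tendsto_condCDF_atTop ρ a).eventually (eventually_ge_nhds hy1)).exists
    exact ⟨z, hz⟩
  have hbdd : BddBelow S := by
    obtain ⟨z₀, hz₀⟩ := ((tendsto_condCDF_atBot ρ a).eventually (eventually_lt_nhds hy0)).exists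
    refine ⟨z₀, fun z hz => ?_⟩
    by_contra hlt
    push_neg at hlt
    exact absurd (hz.trans ((condCDF ρ a).mono hlt.le)) (not_le.2 hz₀)
  constructor
  · intro h
    have hs : ∀ z, sInf S < z → y ≤ condCDF ρ a z := by
      intro z hz
      obtain ⟨w, hw, hwz⟩ := exists_lt_of_csInf_lt hne hz
      exact hw.trans ((condCDF ρ a).mono hwz.le)
    have hcont : ContinuousWithinAt (condCDF ρ a) (Ioi (sInf S)) (sInf S) :=
      ((condCDF ρ a).right_continuous (sInf S)).mono Ioi_subset_Ici_self
    have hle : y ≤ condCDF ρ a (sInf S) :=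
      ge_of_tendsto hcont (eventually_nhdsWithin_of_forall fun z hz => hs z hz)
    exact hle.trans ((condCDF ρ a).mono h)
  · intro h
    exact csInf_le hbdd h

lemma qH_le_iff (ρ : Measure (ℝ × ℝ)) {p : ℝ × ℝ} (hp : p.2 ∈ Set.Ioo (0:ℝ) 1) (x : ℝ) :
    qH ρ p ≤ x ↔ p.2 ≤ condCDF ρ p.1 x := by
  rw [qH, if_pos hp]
  exact quantile_condCDF_le_iff ρ p.1 hp.1 hp.2 x

lemma measurable_qH (ρ : Measure (ℝ × ℝ)) : Measurable (qH ρ) := by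
  apply measurable_of_Iic
  intro x
  have hset : qH ρ ⁻¹' Iic x =
      ({p : ℝ × ℝ | p.2 ∈ Ioo (0:ℝ) 1} ∩ {p : ℝ × ℝ | p.2 ≤ condCDF ρ p.1 x})
        ∪ ({p : ℝ × ℝ | p.2 ∈ Ioo (0:ℝ) 1}ᶜ ∩ {_p : ℝ × ℝ | (0:ℝ) ≤ x}) := by
    ext p
    simp only [mem_preimage, mem_Iic, mem_union, mem_inter_iff, mem_setOf_eq, mem_compl_iff]
    by_cases hp : p.2 ∈ Ioo (0:ℝ) 1
    · rw [qH_le_iff ρ hp x]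
      simp [hp]
    · rw [qH, if_neg hp]
      simp [hp]
  rw [hset]
  have h1 : MeasurableSet {p : ℝ × ℝ | p.2 ∈ Ioo (0:ℝ) 1} :=
    measurable_snd measurableSet_Ioo
  have h2 : MeasurableSet {p : ℝ × ℝ | p.2 ≤ condCDF ρ p.1 x} :=
    measurableSet_le measurable_snd ((measurable_condCDF ρ x).comp measurable_fst)
  exact (h1.inter h2).union (h1.compl.inter (MeasurableSet.const _))

/-- The law of the quantile transform: if `Y` is uniform on `[0,1)`, then the generalized
inverse of `condCDF ρ a` applied to `Y` has CDF `condCDF ρ a`. -/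
lemma unif01_quantile_measure (ρ : Measure (ℝ × ℝ)) (a x : ℝ) :
    unif01 {y : ℝ | qH ρ (a, y) ≤ x} = ENNReal.ofReal (condCDF ρ a x) := by
  set c := condCDF ρ a x with hc
  have hc0 : 0 ≤ c := condCDF_nonneg ρ a x
  have hc1 : c ≤ 1 := condCDF_le_one ρ a x
  set A : Set ℝ := {y : ℝ | qH ρ (a, y) ≤ x} with hA
  set B : Set ℝ := Ioo (0:ℝ) 1 ∩ Iic c with hB
  have hBA : B ⊆ A ∩ Ico (0:ℝ) 1 := by
    rintro y ⟨hy, hyc⟩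
    exact ⟨(qH_le_iff ρ (p := (a, y)) hy x).2 hyc, ⟨hy.1.le, hy.2⟩⟩
  have hAB : A ∩ Ico (0:ℝ) 1 ⊆ B ∪ {0} := by
    rintro y ⟨hyA, hy0, hy1⟩
    rcases eq_or_lt_of_le hy0 with h0 | h0
    · exact Or.inr (by simp [← h0])
    · exact Or.inl ⟨⟨h0, hy1⟩, (qH_le_iff ρ (p := (a, y)) ⟨h0, hy1⟩ x).1 hyA⟩
  have hval : volume B = ENNReal.ofReal c := by
    rcases lt_or_ge c 1 with hlt | hge
    · have : B = Ioc (0:ℝ) c := by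
        ext y
        simp only [hB, mem_inter_iff, mem_Ioo, mem_Iic, mem_Ioc]
        exact ⟨fun ⟨⟨h1, _⟩, h3⟩ => ⟨h1, h3⟩, fun ⟨h1, h3⟩ => ⟨⟨h1, h3.trans_lt hlt⟩, h3⟩⟩
      rw [this, Real.volume_Ioc, sub_zero]
    · have hce : c = 1 := le_antisymm hc1 hge
      have : B = Ioo (0:ℝ) 1 := by
        rw [hB, inter_eq_left]
        exact fun y hy => le_of_lt (lt_of_lt_of_le hy.2 hge)
      rw [this, Real.volume_Ioo, hce]
      norm_num
  have h1 : unif01 A = volume (A ∩ Ico (0:ℝ) 1) :=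
    Measure.restrict_apply' measurableSet_Ico
  rw [h1, ← hval]
  refine le_antisymm ?_ (measure_mono hBA)
  calc volume (A ∩ Ico (0:ℝ) 1) ≤ volume (B ∪ {0}) := measure_mono hAB
    _ ≤ volume B + volume ({0} : Set ℝ) := measure_union_le _ _
    _ = volume B := by simp

/-- Factorization of measure-preserving maps (`k = 0` case of the skew-product factorization):
if `G₀ : [0,1) → [0,1)` is Borel and pushes Lebesgue measure to Lebesgue measure, then there is
a Borel map `H₀ : [0,1) × [0,1) → [0,1)` such that for `(X,Y)` independent uniform on `[0,1)`,
`H₀(X,Y)` is uniform on `[0,1)` and `G₀(H₀(X,Y)) = X` almost surely. -/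
theorem factorization_base_case (G₀ : ℝ → ℝ) (hG₀ : Measurable G₀)
    (hG₀range : ∀ x ∈ Set.Ico (0:ℝ) 1, G₀ x ∈ Set.Ico (0:ℝ) 1)
    (hG₀mp : unif01.map G₀ = unif01) :
    ∃ H₀ : ℝ × ℝ → ℝ, Measurable H₀ ∧
      (unif01.prod unif01).map H₀ = unif01 ∧
      ∀ᵐ p ∂(unif01.prod unif01), G₀ (H₀ p) = p.1 := by
  classical
  set ρ : Measure (ℝ × ℝ) := unif01.map (fun z => (G₀ z, z)) with hρ
  have hpair : Measurable fun z : ℝ => (G₀ z, z) := hG₀.prodMk measurable_id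
  haveI hρprob : IsProbabilityMeasure ρ := Measure.isProbabilityMeasure_map hpair.aemeasurable
  have hfst : ρ.fst = unif01 := by
    rw [hρ, Measure.fst_map_prodMk (X := G₀) (Y := fun z : ℝ => z) measurable_id]
    exact hG₀mp
  have hsnd : ρ.map Prod.snd = unif01 := by
    rw [hρ, Measure.map_map measurable_snd hpair]
    have : Prod.snd ∘ (fun z : ℝ => (G₀ z, z)) = id := rfl
    rw [this, Measure.map_id]
  have hHmeas : Measurable (qH ρ) := measurable_qH ρ
  set f : Unit × ℝ → StieltjesFunction ℝ := fun p => condCDF ρ p.2 with hf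
  have hck := isCondKernelCDF_condCDF ρ
  rw [hfst] at hck
  have hfiber : ∀ a : ℝ, unif01.map (fun y => qH ρ (a, y)) = hck.toKernel f ((), a) := by
    intro a
    have hma : Measurable fun y => qH ρ (a, y) := hHmeas.comp measurable_prodMk_left
    haveI : IsProbabilityMeasure (unif01.map fun y => qH ρ (a, y)) :=
      Measure.isProbabilityMeasure_map hma.aemeasurable
    refine Measure.ext_of_Iic _ _ fun x => ?_
    rw [Measure.map_apply hma measurableSet_Iic, hck.toKernel_Iic ((), a)]
    exact unif01_quantile_measure ρ a x
  have hmeas2 : Measurable fun p : ℝ × ℝ => (p.1, qH ρ p) := measurable_fst.prodMk hHmeas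
  have hjoint : (unif01.prod unif01).map (fun p => (p.1, qH ρ p)) = ρ := by
    ext s hs
    rw [Measure.map_apply hmeas2 hs, Measure.prod_apply (hmeas2 hs)]
    have hcp : ρ = (Kernel.const Unit unif01 ⊗ₖ hck.toKernel f) () := by
      rw [compProd_toKernel hck, Kernel.const_apply]
    conv_rhs => rw [hcp]
    rw [Kernel.compProd_apply hs]
    simp only [Kernel.const_apply]
    refine lintegral_congr fun a => ?_
    rw [← hfiber a]
    show unif01 (Prod.mk a ⁻¹' ((fun p => (p.1, qH ρ p)) ⁻¹' s))
        = (Measure.map (fun y => qH ρ (a, y)) unif01) (Prod.mk a ⁻¹' s)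
    rw [Measure.map_apply
      (show Measurable fun y => qH ρ (a, y) from hHmeas.comp measurable_prodMk_left)
      (measurable_prodMk_left hs)]
    rfl
  refine ⟨qH ρ, hHmeas, ?_, ?_⟩
  · calc (unif01.prod unif01).map (qH ρ)
        = ((unif01.prod unif01).map (fun p => (p.1, qH ρ p))).map Prod.snd :=
          (Measure.map_map measurable_snd hmeas2).symm
      _ = ρ.map Prod.snd := by rw [hjoint]
      _ = unif01 := hsnd
  · have hD : MeasurableSet {q : ℝ × ℝ | G₀ q.2 = q.1} := by
      have : {q : ℝ × ℝ | G₀ q.2 = q.1} = (fun q : ℝ × ℝ => G₀ q.2 - q.1) ⁻¹' {0} := by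
        ext q; simp [sub_eq_zero]
      rw [this]
      exact ((hG₀.comp measurable_snd).sub measurable_fst) (measurableSet_singleton 0)
    rw [ae_iff]
    have hset : {p : ℝ × ℝ | ¬ G₀ (qH ρ p) = p.1} =
        (fun p : ℝ × ℝ => (p.1, qH ρ p)) ⁻¹' {q : ℝ × ℝ | G₀ q.2 = q.1}ᶜ := rfl
    rw [hset, ← Measure.map_apply hmeas2 hD.compl, hjoint, hρ,
      Measure.map_apply hpair hD.compl]
    have : (fun z : ℝ => (G₀ z, z)) ⁻¹' {q : ℝ × ℝ | G₀ q.2 = q.1}ᶜ = ∅ := by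
      ext z; simp
    rw [this, measure_empty]
end

section
/- Derivation of an ERM from a row-column exchangeable array via de Finetti: let (X_{i,n})_{(i,n)∈ℕ²} be a row-column exchangeable array valued in a standard Borel space A, i.e. (X_{σ(i),τ(n)})_{i,n} =^law (X_{i,n})_{i,n} for all finitely supported permutations σ, τ. Viewing ((X_{i,n})_i)_n as an exchangeable sequence of A^ℕ-valued random variables, let 𝛍 be its de Finetti directing random measure on A^ℕ (so that law(((X_{i,n})_i)_n) = E[𝛍^{⊗ℕ}]). Then 𝛍 is an exchangeable random measure: (T^σ)_*𝛍 =^law 𝛍 for every finitely supported permutation σ, where T^σ permutes the coordinates of A^ℕ. -/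
open MeasureTheory

/-- A permutation of `ℕ` is finitely supported if it fixes all but finitely many elements. -/
def FinitelySupported (σ : Equiv.Perm ℕ) : Prop := {n : ℕ | σ n ≠ n}.Finite

theorem Equiv.Perm.inv_apply_self {α : Type*} (f : Equiv.Perm α) (x : α) : f⁻¹ (f x) = x :=
  Equiv.Perm.inv_eq_iff_eq.mpr rfl

theorem Equiv.Perm.apply_inv_self {α : Type*} (f : Equiv.Perm α) (x : α) : f (f⁻¹ x) = x :=
  (Equiv.eq_symm_apply f).mp rfl

section ERMAuxSection

open Set Filter
open scoped ENNReal

namespace ERMAux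

lemma finitelySupported_one : FinitelySupported 1 := by
  have : {n : ℕ | (1 : Equiv.Perm ℕ) n ≠ n} = ∅ := by ext n; simp
  rw [FinitelySupported, this]
  exact Set.finite_empty

lemma finitelySupported_inv {σ : Equiv.Perm ℕ} (h : FinitelySupported σ) :
    FinitelySupported σ⁻¹ := by
  have : {n : ℕ | σ⁻¹ n ≠ n} = {n : ℕ | σ n ≠ n} := by
    ext n
    simp only [Set.mem_setOf_eq, ne_eq]
    constructor
    · intro h1 h2
      exact h1 (by rw [← h2]; exact (Equiv.Perm.inv_apply_self σ n).symm ▸ by rw [h2])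
    · intro h1 h2
      exact h1 (by conv_lhs => rw [← h2, Equiv.Perm.apply_inv_self])
  rw [FinitelySupported, this]
  exact h

variable {α : Type*}

/-- Intersection of a list of sets. -/
def listInter (l : List (Set α)) : Set α := l.foldr (· ∩ ·) Set.univ

lemma listInter_nil : listInter ([] : List (Set α)) = univ := rfl

lemma listInter_cons (s : Set α) (l : List (Set α)) :
    listInter (s :: l) = s ∩ listInter l := rfl

lemma listInter_append (l₁ l₂ : List (Set α)) :
    listInter (l₁ ++ l₂) = listInter l₁ ∩ listInter l₂ := by
  induction l₁ with
  | nil => simp [listInter_nil, listInter]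
  | cons a l ih => simp [listInter_cons, ih, Set.inter_assoc]

/-- Closure of a family of sets under finite intersections (including the empty
intersection `univ`). -/
def interClosure (g : Set (Set α)) : Set (Set α) :=
  Set.range (fun l : List g => listInter (l.map Subtype.val))

lemma countable_interClosure {g : Set (Set α)} (hg : g.Countable) :
    (interClosure g).Countable := by
  have : Countable g := hg.to_subtype
  exact Set.countable_range _

lemma univ_mem_interClosure (g : Set (Set α)) : univ ∈ interClosure g :=
  ⟨[], rfl⟩

lemma mem_interClosure_of_mem {g : Set (Set α)} {s : Set α} (hs : s ∈ g) :
    s ∈ interClosure g :=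
  ⟨[⟨s, hs⟩], by simp [listInter_cons, listInter_nil]⟩

lemma inter_mem_interClosure {g : Set (Set α)} {s t : Set α}
    (hs : s ∈ interClosure g) (ht : t ∈ interClosure g) :
    s ∩ t ∈ interClosure g := by
  obtain ⟨l₁, rfl⟩ := hs
  obtain ⟨l₂, rfl⟩ := ht
  exact ⟨l₁ ++ l₂, by simp [listInter_append]⟩

lemma measurableSet_interClosure [MeasurableSpace α] {g : Set (Set α)}
    (hg : ∀ s ∈ g, MeasurableSet s) {s : Set α} (hs : s ∈ interClosure g) :
    MeasurableSet s := by
  obtain ⟨l, rfl⟩ := hs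
  induction l with
  | nil => simpa [listInter_nil] using MeasurableSet.univ
  | cons a l ih => exact (hg a a.2).inter ih

lemma generateFrom_interClosure [m : MeasurableSpace α] {g : Set (Set α)}
    (hg : MeasurableSpace.generateFrom g = m) :
    MeasurableSpace.generateFrom (interClosure g) = m := by
  refine le_antisymm ?_ ?_
  · refine MeasurableSpace.generateFrom_le fun s hs => ?_
    exact measurableSet_interClosure
      (fun t ht => hg ▸ MeasurableSpace.measurableSet_generateFrom ht) hs
  · rw [← hg]
    exact MeasurableSpace.generateFrom_le fun s hs =>
      MeasurableSpace.measurableSet_generateFrom (mem_interClosure_of_mem hs)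



section Boxes
variable {A : Type*}

/-- Finite-dimensional box cylinders in `ℕ → A`. -/
def box (N : ℕ) (s : ℕ → Set A) : Set (ℕ → A) := {y | ∀ i < N, y i ∈ s i}

lemma box_congr {N : ℕ} {s t : ℕ → Set A} (h : ∀ i < N, s i = t i) :
    box N s = box N t := by
  ext y; exact forall₂_congr fun i hi => by rw [h i hi]

lemma box_zero (s : ℕ → Set A) : box 0 s = univ := by
  ext y; simp [box]


lemma measurableSet_box [MeasurableSpace A] {N : ℕ} {s : ℕ → Set A}
    (hs : ∀ i, MeasurableSet (s i)) : MeasurableSet (box N s) := by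
  have : box N s = ⋂ (i : ℕ) (_ : i < N), (fun y : ℕ → A => y i) ⁻¹' s i := by
    ext y; simp [box]
  rw [this]
  exact MeasurableSet.iInter fun i => MeasurableSet.iInter fun _ =>
    (measurable_pi_apply i) (hs i)

/-- The boxes with sides in a given family `g'`. -/
def boxes (g' : Set (Set A)) : Set (Set (ℕ → A)) :=
  {C | ∃ N, ∃ s : ℕ → Set A, (∀ i, s i ∈ g') ∧ C = box N s}

lemma univ_mem_boxes {g' : Set (Set A)} (hu : univ ∈ g') : univ ∈ boxes g' :=
  ⟨0, fun _ => univ, fun _ => hu, (box_zero _).symm⟩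

lemma countable_boxes {g' : Set (Set A)} (hg' : g'.Countable) (hu : univ ∈ g') :
    (boxes g').Countable := by
  have : Countable g' := hg'.to_subtype
  have heq : boxes g' = ⋃ N : ℕ, Set.range (fun s : Fin N → g' =>
      box N (fun i => if h : i < N then (s ⟨i, h⟩ : Set A) else univ)) := by
    ext C
    constructor
    · rintro ⟨N, s, hs, rfl⟩
      refine Set.mem_iUnion.2 ⟨N, ⟨fun i => ⟨s i, hs i⟩, ?_⟩⟩
      exact box_congr fun i hi => by simp [hi]
    · rintro h
      obtain ⟨N, s, rfl⟩ := Set.mem_iUnion.1 h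
      refine ⟨N, _, fun i => ?_, rfl⟩
      by_cases h : i < N
      · simpa [h] using (s ⟨i, h⟩).2
      · simpa [h] using hu
  rw [heq]
  exact Set.countable_iUnion fun N => Set.countable_range _

lemma isPiSystem_boxes {g' : Set (Set A)} (hu : univ ∈ g')
    (hI : ∀ s ∈ g', ∀ t ∈ g', s ∩ t ∈ g') : IsPiSystem (boxes g') := by
  rintro C₁ ⟨N₁, s₁, hs₁, rfl⟩ C₂ ⟨N₂, s₂, hs₂, rfl⟩ -
  refine ⟨max N₁ N₂, fun i => (if i < N₁ then s₁ i else univ) ∩ (if i < N₂ then s₂ i else univ),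
    fun i => ?_, ?_⟩
  · refine hI _ ?_ _ ?_ <;> split_ifs <;> first | assumption | exact hs₁ i | exact hs₂ i
  · ext y
    simp only [Set.mem_inter_iff, box, Set.mem_setOf_eq]
    constructor
    · rintro ⟨h₁, h₂⟩ i _
      refine ⟨?_, ?_⟩ <;> split_ifs with h
      · exact h₁ i h
      · exact mem_univ _
      · exact h₂ i h
      · exact mem_univ _
    · intro h
      constructor
      · intro i hi
        have := (h i (lt_of_lt_of_le hi (le_max_left _ _))).1
        rwa [if_pos hi] at this
      · intro i hi
        have := (h i (lt_of_lt_of_le hi (le_max_right _ _))).2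
        rwa [if_pos hi] at this

lemma generateFrom_boxes [m : MeasurableSpace A] {g g' : Set (Set A)}
    (hg : MeasurableSpace.generateFrom g = m) (hsub : g ⊆ g') (hu : univ ∈ g')
    (hmeas : ∀ s ∈ g', MeasurableSet s) :
    MeasurableSpace.generateFrom (boxes g') = MeasurableSpace.pi := by
  refine le_antisymm ?_ ?_
  · refine MeasurableSpace.generateFrom_le ?_
    rintro C ⟨N, s, hs, rfl⟩
    have : box N s = ⋂ (i : ℕ) (_ : i < N), (fun y : ℕ → A => y i) ⁻¹' s i := by
      ext y; simp [box]
    rw [this]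
    exact MeasurableSet.iInter fun i => MeasurableSet.iInter fun _ =>
      (measurable_pi_apply i) (hmeas _ (hs i))
  · rw [MeasurableSpace.pi_eq_generateFrom_projections]
    refine MeasurableSpace.generateFrom_le ?_
    rintro B ⟨i, u, hu', rfl⟩
    have hev : Measurable[MeasurableSpace.generateFrom (boxes g'), m]
        (fun y : ℕ → A => y i) := by
      rw [← hg]
      refine @measurable_generateFrom _ _ (MeasurableSpace.generateFrom (boxes g')) _ _
        fun t ht => ?_
      refine MeasurableSpace.measurableSet_generateFrom
        ⟨i + 1, fun j => if j = i then t else univ, fun j => ?_, ?_⟩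
      · by_cases hj : j = i
        · simpa [hj] using hsub ht
        · simpa [hj] using hu
      · ext y
        simp only [Set.mem_preimage, box, Set.mem_setOf_eq]
        constructor
        · intro h j _
          split_ifs with hj
          · cases hj; exact h
          · exact mem_univ _
        · intro h
          have := h i (Nat.lt_succ_self i)
          rwa [if_pos rfl] at this
    exact hev hu'


end Boxes

/-- The compact space `[0,1]^ℕ`. -/
abbrev Cube : Type := ℕ → Set.Icc (0 : ℝ) 1

/-- Coordinate function on the cube. -/
noncomputable def coordFn (n : ℕ) : C(Cube, ℝ) :=
  ⟨fun x => (x n : ℝ), by fun_prop⟩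

/-- Monomial function on the cube. -/
noncomputable def monoFn (l : List ℕ) : C(Cube, ℝ) := (l.map coordFn).prod

lemma monoFn_apply (l : List ℕ) (x : Cube) :
    monoFn l x = (l.map (fun n => (x n : ℝ))).prod := by
  induction l with
  | nil => simp [monoFn]
  | cons a l ih =>
    simp only [monoFn, List.map_cons, List.prod_cons] at *
    rw [ContinuousMap.mul_apply, ih]
    rfl

lemma integrable_continuousMap (μ : Measure Cube) [IsFiniteMeasure μ] (f : C(Cube, ℝ)) :
    Integrable (fun x => f x) μ := by
  have := (BoundedContinuousFunction.mkOfCompact f).integrable μ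
  exact this

/-- Probability measures on the cube with equal moments are equal. -/
lemma cube_measure_ext_of_moments (μ ν : Measure Cube)
    [IsProbabilityMeasure μ] [IsProbabilityMeasure ν]
    (h : ∀ l : List ℕ, ∫ x, monoFn l x ∂μ = ∫ x, monoFn l x ∂ν) : μ = ν := by
  -- the subalgebra generated by coordinates
  set Alg : Subalgebra ℝ C(Cube, ℝ) := Algebra.adjoin ℝ (Set.range coordFn) with hAlg
  -- integrals agree on monoid closure
  have hmono : ∀ p ∈ Submonoid.closure (Set.range coordFn),
      ∫ x, p x ∂μ = ∫ x, p x ∂ν := by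
    intro p hp
    obtain ⟨l, hl, rfl⟩ := Submonoid.exists_list_of_mem_closure hp
    have : ∃ l' : List ℕ, l.prod = monoFn l' := by
      clear hp
      induction l with
      | nil => exact ⟨[], by simp [monoFn]⟩
      | cons q l ih =>
        obtain ⟨l', hl'⟩ := ih (fun r hr => hl r (List.mem_cons_of_mem _ hr))
        obtain ⟨n, rfl⟩ := hl q (List.mem_cons_self)
        exact ⟨n :: l', by simp [monoFn, List.prod_cons, hl']⟩
    obtain ⟨l', hl'⟩ := this
    rw [hl']
    exact h l'
  -- integrals agree on the subalgebra
  have hspan : ∀ p ∈ Submodule.span ℝ (Submonoid.closure (Set.range coordFn) : Set C(Cube, ℝ)),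
      ∫ x, p x ∂μ = ∫ x, p x ∂ν := by
    intro p hp
    induction hp using Submodule.span_induction with
    | mem q hq => exact hmono q hq
    | zero => simp
    | add q r hq hr ihq ihr =>
      simp only [ContinuousMap.add_apply]
      rw [integral_add (integrable_continuousMap μ q) (integrable_continuousMap μ r),
        integral_add (integrable_continuousMap ν q) (integrable_continuousMap ν r), ihq, ihr]
    | smul a q hq ihq =>
      have hsm : ∀ (m : Measure Cube), ∫ x, (a • q) x ∂m = a * ∫ x, q x ∂m := by
        intro m
        simp only [ContinuousMap.smul_apply, smul_eq_mul]
        rw [integral_const_mul]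
      rw [hsm, hsm, ihq]
  have halg : ∀ p ∈ Alg, ∫ x, p x ∂μ = ∫ x, p x ∂ν := by
    intro p hp
    refine hspan p ?_
    rw [← Algebra.adjoin_eq_span]
    exact hp
  -- the subalgebra separates points
  have hsep : Alg.SeparatesPoints := by
    intro x y hxy
    have : ∃ n, x n ≠ y n := by
      by_contra hc
      push_neg at hc
      exact hxy (funext hc)
    obtain ⟨n, hn⟩ := this
    refine ⟨(coordFn n : Cube → ℝ), ⟨coordFn n, Algebra.subset_adjoin ⟨n, rfl⟩, rfl⟩, ?_⟩
    exact fun hco => hn (Subtype.coe_injective hco)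
  -- integrals of arbitrary continuous functions agree
  have hcont : ∀ g : C(Cube, ℝ), ∫ x, g x ∂μ = ∫ x, g x ∂ν := by
    intro g
    have key : ∀ ε : ℝ, 0 < ε → |(∫ x, g x ∂μ) - ∫ x, g x ∂ν| ≤ 2 * ε := by
      intro ε hε
      obtain ⟨p, hp⟩ :=
        ContinuousMap.exists_mem_subalgebra_near_continuousMap_of_separatesPoints Alg hsep g ε hε
      have hbound : ∀ (m : Measure Cube) [IsProbabilityMeasure m],
          |(∫ x, g x ∂m) - ∫ x, (p : C(Cube, ℝ)) x ∂m| ≤ ε := by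
        intro m _
        rw [← integral_sub (integrable_continuousMap m g) (integrable_continuousMap m _)]
        have : ∀ x, ‖g x - (p : C(Cube, ℝ)) x‖ ≤ ε := by
          intro x
          have h1 : ‖((p : C(Cube, ℝ)) - g) x‖ ≤ ‖(p : C(Cube, ℝ)) - g‖ :=
            ContinuousMap.norm_coe_le_norm _ x
          have h2 : (((p : C(Cube, ℝ)) - g) x) = (p : C(Cube, ℝ)) x - g x := rfl
          rw [h2] at h1
          calc ‖g x - (p : C(Cube, ℝ)) x‖ = ‖(p : C(Cube, ℝ)) x - g x‖ := norm_sub_rev _ _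
          _ ≤ ‖(p : C(Cube, ℝ)) - g‖ := h1
          _ ≤ ε := le_of_lt hp
        have := norm_integral_le_of_norm_le_const (μ := m)
          (f := fun x => g x - (p : C(Cube, ℝ)) x) (C := ε) (Filter.Eventually.of_forall this)
        simpa using this
      have hpint : ∫ x, (p : C(Cube, ℝ)) x ∂μ = ∫ x, (p : C(Cube, ℝ)) x ∂ν := halg _ p.2
      calc |(∫ x, g x ∂μ) - ∫ x, g x ∂ν|
          = |((∫ x, g x ∂μ) - ∫ x, (p : C(Cube, ℝ)) x ∂μ)
            + ((∫ x, (p : C(Cube, ℝ)) x ∂ν) - ∫ x, g x ∂ν)| := by rw [hpint]; ring_nf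
        _ ≤ |(∫ x, g x ∂μ) - ∫ x, (p : C(Cube, ℝ)) x ∂μ|
            + |(∫ x, (p : C(Cube, ℝ)) x ∂ν) - ∫ x, g x ∂ν| := abs_add_le _ _
        _ ≤ ε + ε := by
            refine add_le_add (hbound μ) ?_
            rw [abs_sub_comm]; exact hbound ν
        _ = 2 * ε := by ring
    have : |(∫ x, g x ∂μ) - ∫ x, g x ∂ν| ≤ 0 := by
      refine le_of_forall_pos_le_add ?_
      intro ε hε
      calc |(∫ x, g x ∂μ) - ∫ x, g x ∂ν| ≤ 2 * (ε / 2) := key _ (by positivity)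
      _ = 0 + ε := by ring
    have := le_antisymm this (abs_nonneg _)
    rwa [abs_eq_zero, sub_eq_zero] at this
  -- conclude by the bounded continuous functions criterion
  refine ext_of_forall_lintegral_eq_of_IsFiniteMeasure ?_
  intro f
  have hμ : ∫⁻ x, f x ∂μ = ENNReal.ofReal (∫ x, (f x : ℝ) ∂μ) :=
    lintegral_coe_eq_integral _ (f.integrable_of_nnreal μ)
  have hν : ∫⁻ x, f x ∂ν = ENNReal.ofReal (∫ x, (f x : ℝ) ∂ν) :=
    lintegral_coe_eq_integral _ (f.integrable_of_nnreal ν)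
  rw [hμ, hν]
  exact congrArg ENNReal.ofReal
    (hcont ⟨fun x => (f x : ℝ), NNReal.continuous_coe.comp f.continuous⟩)


lemma listProd_eq_range_prod {β M : Type*} [CommMonoid M] (l : List β) (d : β) (f : β → M) :
    (l.map f).prod = ∏ n ∈ Finset.range l.length, f (l.getD n d) := by
  induction l with
  | nil => simp
  | cons a l ih =>
    rw [List.map_cons, List.prod_cons, List.length_cons, Finset.prod_range_succ']
    simp only [List.getD_cons_succ, List.getD_cons_zero]
    rw [← ih, mul_comm]

lemma toReal_listProd (L : List ℝ≥0∞) :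
    L.prod.toReal = (L.map ENNReal.toReal).prod := by
  induction L with
  | nil => simp
  | cons a L ih => simp [ENNReal.toReal_mul, ih]

lemma listProd_le_one (L : List ℝ≥0∞) (h : ∀ a ∈ L, a ≤ 1) : L.prod ≤ 1 := by
  induction L with
  | nil => simp
  | cons a L ih =>
    rw [List.prod_cons]
    exact mul_le_one' (h a (List.mem_cons_self))
      (ih fun b hb => h b (List.mem_cons_of_mem _ hb))

variable {Ω S : Type*} [MeasurableSpace Ω] [MeasurableSpace S]

lemma moment_integral (P : Measure Ω) [IsProbabilityMeasure P] (ζ : Ω → Measure S)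
    (hζ : Measurable ζ) (hζp : ∀ ω, IsProbabilityMeasure (ζ ω)) (e : ℕ → Set S)
    (hem : ∀ n, MeasurableSet (e n)) (l : List ℕ)
    (W : Ω → Cube) (hWeq : ∀ ω n, (W ω n : ℝ) = (ζ ω (e n)).toReal) :
    ∫ ω, monoFn l (W ω) ∂P
      = (∫⁻ ω, ((l.map e).map (fun c => ζ ω c)).prod ∂P).toReal := by
  have hgetDm : ∀ n, MeasurableSet ((l.map e).getD n univ) := by
    intro n
    by_cases h : n < (l.map e).length
    · rw [List.getD_eq_getElem _ _ h]
      have hmem := List.getElem_mem h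
      obtain ⟨m, -, hme⟩ := List.mem_map.1 hmem
      rw [← hme]
      exact hem m
    · rw [List.getD_eq_default _ _ (le_of_not_gt h)]
      exact MeasurableSet.univ
  have hFm : Measurable (fun ω => ((l.map e).map (fun c => ζ ω c)).prod) := by
    have hrw : (fun ω => ((l.map e).map (fun c => ζ ω c)).prod)
        = fun ω => ∏ n ∈ Finset.range (l.map e).length, ζ ω ((l.map e).getD n univ) := by
      funext ω; exact listProd_eq_range_prod _ _ _
    rw [hrw]
    exact Finset.measurable_prod _ fun n _ => (Measure.measurable_coe (hgetDm n)).comp hζ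
  have hfin : ∀ ω, ((l.map e).map (fun c => ζ ω c)).prod ≤ 1 := by
    intro ω
    refine listProd_le_one _ ?_
    intro a ha
    obtain ⟨c, -, rfl⟩ := List.mem_map.1 ha
    haveI := hζp ω
    exact prob_le_one
  rw [← integral_toReal hFm.aemeasurable
    (Eventually.of_forall fun ω => lt_of_le_of_lt (hfin ω) ENNReal.one_lt_top)]
  refine integral_congr_ae (Eventually.of_forall fun ω => ?_)
  show monoFn l (W ω) = ((l.map e).map (fun c => ζ ω c)).prod.toReal
  rw [monoFn_apply, toReal_listProd, List.map_map, List.map_map]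
  refine congrArg List.prod ?_
  refine List.map_congr_left fun n _ => ?_
  simp [hWeq, Function.comp]

/-- Two measurable families of probability measures with the same joint moments over a
countable generating π-system have the same law. -/
theorem map_eq_of_moments (P : Measure Ω) [IsProbabilityMeasure P]
    (𝒞 : Set (Set S)) (hcnt : 𝒞.Countable) (hpi : IsPiSystem 𝒞) (huniv : univ ∈ 𝒞)
    (hgen : MeasurableSpace.generateFrom 𝒞 = ‹MeasurableSpace S›)
    (κ η : Ω → Measure S) (hκ : Measurable κ) (hη : Measurable η)
    (hκp : ∀ ω, IsProbabilityMeasure (κ ω)) (hηp : ∀ ω, IsProbabilityMeasure (η ω))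
    (H : ∀ (N : ℕ) (c : ℕ → Set S), (∀ n, c n ∈ 𝒞) →
      ∫⁻ ω, ∏ n ∈ Finset.range N, κ ω (c n) ∂P = ∫⁻ ω, ∏ n ∈ Finset.range N, η ω (c n) ∂P) :
    P.map κ = P.map η := by
  have hmeas𝒞 : ∀ c ∈ 𝒞, MeasurableSet c := fun c hc =>
    hgen ▸ MeasurableSpace.measurableSet_generateFrom hc
  have hgetD : ∀ (l : List (Set S)), (∀ c ∈ l, c ∈ 𝒞) → ∀ n, l.getD n univ ∈ 𝒞 := by
    intro l hl n
    by_cases h : n < l.length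
    · rw [List.getD_eq_getElem l univ h]
      exact hl _ (List.getElem_mem h)
    · rw [List.getD_eq_default l univ (le_of_not_gt h)]
      exact huniv
  have hlist : ∀ l : List (Set S), (∀ c ∈ l, c ∈ 𝒞) →
      ∫⁻ ω, (l.map (fun c => κ ω c)).prod ∂P = ∫⁻ ω, (l.map (fun c => η ω c)).prod ∂P := by
    intro l hl
    have h0 := H l.length (fun n => l.getD n univ) (hgetD l hl)
    calc ∫⁻ ω, (l.map (fun c => κ ω c)).prod ∂P
        = ∫⁻ ω, ∏ n ∈ Finset.range l.length, κ ω (l.getD n univ) ∂P :=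
          lintegral_congr fun ω => listProd_eq_range_prod l univ _
      _ = ∫⁻ ω, ∏ n ∈ Finset.range l.length, η ω (l.getD n univ) ∂P := h0
      _ = ∫⁻ ω, (l.map (fun c => η ω c)).prod ∂P :=
          (lintegral_congr fun ω => listProd_eq_range_prod l univ _).symm
  -- enumeration of 𝒞
  obtain ⟨e, he⟩ := Set.Countable.exists_eq_range hcnt ⟨univ, huniv⟩
  have hen : ∀ n, e n ∈ 𝒞 := fun n => he ▸ Set.mem_range_self n
  have hem : ∀ n, MeasurableSet (e n) := fun n => hmeas𝒞 _ (hen n)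
  have hmemIcc : ∀ (ζ : Ω → Measure S), (∀ ω, IsProbabilityMeasure (ζ ω)) →
      ∀ ω n, (ζ ω (e n)).toReal ∈ Set.Icc (0:ℝ) 1 := by
    intro ζ hζp ω n
    haveI := hζp ω
    refine ⟨ENNReal.toReal_nonneg, ?_⟩
    have h1 : ζ ω (e n) ≤ 1 := prob_le_one
    have := ENNReal.toReal_mono ENNReal.one_ne_top h1
    simpa using this
  set Wκ : Ω → Cube := fun ω n => ⟨(κ ω (e n)).toReal, hmemIcc κ hκp ω n⟩ with hWκdef
  set Wη : Ω → Cube := fun ω n => ⟨(η ω (e n)).toReal, hmemIcc η hηp ω n⟩ with hWηdef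
  have hWκ : Measurable Wκ := measurable_pi_lambda _ fun n =>
    Measurable.subtype_mk (ENNReal.measurable_toReal.comp
      ((Measure.measurable_coe (hem n)).comp hκ))
  have hWη : Measurable Wη := measurable_pi_lambda _ fun n =>
    Measurable.subtype_mk (ENNReal.measurable_toReal.comp
      ((Measure.measurable_coe (hem n)).comp hη))
  haveI : IsProbabilityMeasure (P.map Wκ) := Measure.isProbabilityMeasure_map hWκ.aemeasurable
  haveI : IsProbabilityMeasure (P.map Wη) := Measure.isProbabilityMeasure_map hWη.aemeasurable
  -- the laws of the real vectors agree
  have hW : P.map Wκ = P.map Wη := by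
    refine cube_measure_ext_of_moments _ _ (fun l => ?_)
    rw [integral_map hWκ.aemeasurable (monoFn l).continuous.aestronglyMeasurable,
      integral_map hWη.aemeasurable (monoFn l).continuous.aestronglyMeasurable,
      moment_integral P κ hκ hκp e hem l Wκ (fun ω n => rfl),
      moment_integral P η hη hηp e hem l Wη (fun ω n => rfl)]
    refine congrArg ENNReal.toReal (hlist (l.map e) ?_)
    intro c hc
    obtain ⟨n, -, rfl⟩ := List.mem_map.1 hc
    exact hen n
  -- transfer to the ℝ≥0∞-valued vectors
  set φ : Cube → (ℕ → ℝ≥0∞) := fun x n => ENNReal.ofReal (x n) with hφdef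
  have hφ : Measurable φ := measurable_pi_lambda _ fun n =>
    ENNReal.measurable_ofReal.comp (measurable_subtype_coe.comp (measurable_pi_apply n))
  have hvecκ : (fun ω n => κ ω (e n)) = φ ∘ Wκ := by
    funext ω n
    simp only [hφdef, hWκdef, Function.comp_apply]
    exact (ENNReal.ofReal_toReal (measure_ne_top _ _)).symm
  have hvecη : (fun ω n => η ω (e n)) = φ ∘ Wη := by
    funext ω n
    simp only [hφdef, hWηdef, Function.comp_apply]
    exact (ENNReal.ofReal_toReal (measure_ne_top _ _)).symm
  have hvec : P.map (fun ω n => κ ω (e n)) = P.map (fun ω n => η ω (e n)) := by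
    rw [hvecκ, hvecη, ← Measure.map_map hφ hWκ, ← Measure.map_map hφ hWη, hW]
  -- the σ-algebra on probability measures is generated by evaluations at sets in 𝒞
  set PM := {ν : Measure S // IsProbabilityMeasure ν} with hPMdef
  set ρ : PM → (ℕ → ℝ≥0∞) := fun ν n => (ν : Measure S) (e n) with hρdef
  set m₀ : MeasurableSpace PM := MeasurableSpace.comap ρ inferInstance with hm₀def
  have hρm : Measurable[m₀] ρ := measurable_iff_comap_le.2 le_rfl
  have hdyn : ∀ ⦃t : Set S⦄, MeasurableSet t →
      Measurable[m₀] (fun ν : PM => (ν : Measure S) t) := by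
    refine MeasurableSpace.induction_on_inter hgen.symm hpi ?_ ?_ ?_ ?_
    · have : (fun ν : PM => (ν : Measure S) ∅) = fun _ => (0 : ℝ≥0∞) := by
        funext ν; exact measure_empty
      rw [this]; exact measurable_const
    · intro t ht
      rw [he] at ht
      obtain ⟨n, rfl⟩ := ht
      exact (measurable_pi_apply n).comp hρm
    · intro t ht hCt
      have : (fun ν : PM => (ν : Measure S) tᶜ) = fun ν : PM => 1 - (ν : Measure S) t := by
        funext ν
        haveI := ν.2
        rw [measure_compl ht (measure_ne_top _ _), measure_univ]
      rw [this]
      exact Measurable.const_sub hCt 1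
    · intro f hdisj hfm hCf
      have : (fun ν : PM => (ν : Measure S) (⋃ i, f i))
          = fun ν : PM => ∑' i, (ν : Measure S) (f i) := by
        funext ν; exact measure_iUnion hdisj hfm
      rw [this]
      exact Measurable.ennreal_tsum hCf
  have hval : Measurable[m₀] (Subtype.val : PM → Measure S) :=
    Measure.measurable_of_measurable_coe _ fun t ht => hdyn ht
  -- conclude
  set κ' : Ω → PM := fun ω => ⟨κ ω, hκp ω⟩ with hκ'def
  set η' : Ω → PM := fun ω => ⟨η ω, hηp ω⟩ with hη'def
  have hvκ : Measurable (fun ω n => κ ω (e n)) :=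
    measurable_pi_lambda _ fun n => (Measure.measurable_coe (hem n)).comp hκ
  have hvη : Measurable (fun ω n => η ω (e n)) :=
    measurable_pi_lambda _ fun n => (Measure.measurable_coe (hem n)).comp hη
  refine Measure.ext fun T hT => ?_
  rw [Measure.map_apply hκ hT, Measure.map_apply hη hT]
  have hTval : MeasurableSet[m₀] (Subtype.val ⁻¹' T : Set PM) := hval hT
  rw [hm₀def, MeasurableSpace.measurableSet_comap] at hTval
  obtain ⟨U, hU, hUeq⟩ := hTval
  have h1 : κ ⁻¹' T = (fun ω n => κ ω (e n)) ⁻¹' U := by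
    have : κ ⁻¹' T = κ' ⁻¹' (Subtype.val ⁻¹' T) := rfl
    rw [this, ← hUeq]
    rfl
  have h2 : η ⁻¹' T = (fun ω n => η ω (e n)) ⁻¹' U := by
    have : η ⁻¹' T = η' ⁻¹' (Subtype.val ⁻¹' T) := rfl
    rw [this, ← hUeq]
    rfl
  rw [h1, h2, ← Measure.map_apply hvκ hU, ← Measure.map_apply hvη hU, hvec]


end ERMAux

section Main

open MeasureTheory

/-- The de Finetti directing measure of a row-column exchangeable array is an exchangeable
random measure: let `(X_{i,n})` be a row-column exchangeable array valued in a standard Borel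
space `A`, viewed as an exchangeable sequence (in `n`) of `A^ℕ`-valued columns, and let `𝛍` be
its de Finetti directing random measure, so that the law of the array is `E[𝛍^{⊗ℕ}]` (expressed
below through cylinder sets).  Then `(T^σ)_* 𝛍` has the same law as `𝛍` for every finitely
supported permutation `σ`, where `T^σ` permutes the coordinates of `A^ℕ`. -/
theorem directing_measure_of_RCE_is_ERM {Ω A : Type*} [MeasurableSpace Ω]
    [MeasurableSpace A] [StandardBorelSpace A]
    (P : Measure Ω) [IsProbabilityMeasure P]
    (X : Ω → ℕ → ℕ → A) (hX : Measurable X)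
    (hRCE : ∀ σ τ, FinitelySupported σ → FinitelySupported τ →
      P.map (fun ω => fun i n => X ω (σ i) (τ n)) = P.map X)
    (M : Ω → Measure (ℕ → A)) (hM_meas : Measurable M)
    (hM_prob : ∀ ω, IsProbabilityMeasure (M ω))
    (hdirect : ∀ (N : ℕ) (s : ℕ → ℕ → Set A), (∀ n i, MeasurableSet (s n i)) →
      P {ω | ∀ n < N, ∀ i < N, X ω i n ∈ s n i}
        = ∫⁻ ω, ∏ n ∈ Finset.range N, M ω {y | ∀ i < N, y i ∈ s n i} ∂P) :
    ∀ σ, FinitelySupported σ →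
      P.map (fun ω => (M ω).map (fun x => fun i => x (σ i))) = P.map M := by
  intro σ hσ
  classical
  set Tσ : (ℕ → A) → (ℕ → A) := fun x i => x (σ i) with hTσdef
  have hTσ : Measurable Tσ := measurable_pi_lambda _ fun i => measurable_pi_apply (σ i)
  -- the countable generating π-system of boxes
  set g : Set (Set A) := MeasurableSpace.countableGeneratingSet A with hgdef
  set g' : Set (Set A) := insert Set.univ (ERMAux.interClosure g) with hg'def
  have hg'c : g'.Countable :=
    (ERMAux.countable_interClosure
      (MeasurableSpace.countable_countableGeneratingSet)).insert _
  have hu' : Set.univ ∈ g' := Set.mem_insert _ _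
  have hg'meas : ∀ s ∈ g', MeasurableSet s := by
    intro s hs
    rcases hs with rfl | hs
    · exact MeasurableSet.univ
    · exact ERMAux.measurableSet_interClosure
        (fun u hu => MeasurableSpace.measurableSet_countableGeneratingSet hu) hs
  have hg'I : ∀ a ∈ g', ∀ b ∈ g', a ∩ b ∈ g' := by
    intro a ha b hb
    rcases ha with rfl | ha
    · rw [Set.univ_inter]; exact hb
    · rcases hb with rfl | hb
      · rw [Set.inter_univ]; exact Set.mem_insert_of_mem _ ha
      · exact Set.mem_insert_of_mem _ (ERMAux.inter_mem_interClosure ha hb)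
  have hsubg : g ⊆ g' := fun s hs =>
    Set.mem_insert_of_mem _ (ERMAux.mem_interClosure_of_mem hs)
  set 𝒞 : Set (Set (ℕ → A)) := ERMAux.boxes g' with h𝒞def
  have hcnt : 𝒞.Countable := ERMAux.countable_boxes hg'c hu'
  have hpi : IsPiSystem 𝒞 := ERMAux.isPiSystem_boxes hu' hg'I
  have huniv : Set.univ ∈ 𝒞 := ERMAux.univ_mem_boxes hu'
  have hgen : MeasurableSpace.generateFrom 𝒞 = (inferInstance : MeasurableSpace (ℕ → A)) :=
    ERMAux.generateFrom_boxes MeasurableSpace.generateFrom_countableGeneratingSet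
      hsubg hu' hg'meas
  -- properties of the permutation
  obtain ⟨B0, hB0⟩ := hσ.bddAbove
  -- the moment identity
  have H : ∀ (N : ℕ) (c : ℕ → Set (ℕ → A)), (∀ n, c n ∈ 𝒞) →
      ∫⁻ ω, ∏ n ∈ Finset.range N, ((M ω).map Tσ) (c n) ∂P
        = ∫⁻ ω, ∏ n ∈ Finset.range N, M ω (c n) ∂P := by
    intro N c hc
    choose d s hsg' hcb using hc
    have hc_meas : ∀ n, MeasurableSet (c n) := fun n => by
      rw [hcb n]; exact ERMAux.measurableSet_box fun i => hg'meas _ (hsg' n i)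
    set K : ℕ := max (max N (B0 + 1)) ((Finset.range N).sup d) with hKdef
    have hNK : N ≤ K := le_trans (le_max_left _ _) (le_max_left _ _)
    have hBK : B0 + 1 ≤ K := le_trans (le_max_right _ _) (le_max_left _ _)
    have hdK : ∀ n, n < N → d n ≤ K := fun n hn =>
      le_trans (Finset.le_sup (Finset.mem_range.2 hn)) (le_max_right _ _)
    have hsupp : ∀ i, σ i ≠ i → i < K := fun i hi =>
      lt_of_lt_of_le (Nat.lt_succ_of_le (hB0 hi)) hBK
    have hperm : ∀ i, i < K → σ i < K := by
      intro i hi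
      by_cases h : σ i = i
      · rwa [h]
      · exact hsupp _ fun hh => h (σ.injective hh)
    have hperm' : ∀ i, i < K → σ⁻¹ i < K := by
      intro i hi
      by_cases h : σ⁻¹ i = i
      · rwa [h]
      · refine hsupp _ ?_
        intro hh
        rw [Equiv.Perm.apply_inv_self] at hh
        exact h hh.symm
    have permIff : ∀ Q : ℕ → Prop, (∀ i, i < K → Q (σ i)) ↔ ∀ j, j < K → Q j := by
      intro Q
      constructor
      · intro h j hj
        have := h (σ⁻¹ j) (hperm' j hj)
        rwa [Equiv.Perm.apply_inv_self] at this
      · intro h i hi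
        exact h _ (hperm i hi)
    have permIff' : ∀ Q : ℕ → Prop, (∀ i, i < K → Q (σ⁻¹ i)) ↔ ∀ j, j < K → Q j := by
      intro Q
      constructor
      · intro h j hj
        have := h (σ j) (hperm j hj)
        rwa [Equiv.Perm.inv_apply_self] at this
      · intro h i hi
        exact h _ (hperm' i hi)
    set t : ℕ → ℕ → Set A := fun n i => if n < N ∧ i < d n then s n i else Set.univ with htdef
    have htm : ∀ n i, MeasurableSet (t n i) := by
      intro n i
      simp only [htdef]
      split_ifs with h
      · exact hg'meas _ (hsg' n i)
      · exact MeasurableSet.univ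
    set u : ℕ → ℕ → Set A := fun n i => t n (σ⁻¹ i) with hudef
    have hum : ∀ n i, MeasurableSet (u n i) := fun n i => htm n (σ⁻¹ i)
    -- box identities
    have Ft : ∀ n, n < N → {y : ℕ → A | ∀ i < K, y i ∈ t n i} = c n := by
      intro n hn
      rw [hcb n]
      ext y
      simp only [Set.mem_setOf_eq, ERMAux.box]
      constructor
      · intro h i hi
        have := h i (lt_of_lt_of_le hi (hdK n hn))
        simp only [htdef] at this
        rwa [if_pos ⟨hn, hi⟩] at this
      · intro h i hiK
        simp only [htdef]
        split_ifs with hcond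
        · exact h i hcond.2
        · exact Set.mem_univ _
    have Ftuniv : ∀ n, N ≤ n → {y : ℕ → A | ∀ i < K, y i ∈ t n i} = Set.univ := by
      intro n hn
      ext y
      simp only [Set.mem_setOf_eq, Set.mem_univ, iff_true]
      intro i hi
      simp only [htdef]
      rw [if_neg fun hcond => absurd hcond.1 (not_lt.2 hn)]
      exact Set.mem_univ _
    have Fuuniv : ∀ n, N ≤ n → {y : ℕ → A | ∀ i < K, y i ∈ u n i} = Set.univ := by
      intro n hn
      ext y
      simp only [Set.mem_setOf_eq, Set.mem_univ, iff_true]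
      intro i hi
      simp only [hudef, htdef]
      rw [if_neg fun hcond => absurd hcond.1 (not_lt.2 hn)]
      exact Set.mem_univ _
    have Fu : ∀ n, Tσ ⁻¹' {y : ℕ → A | ∀ i < K, y i ∈ t n i}
        = {y : ℕ → A | ∀ i < K, y i ∈ u n i} := by
      intro n
      ext y
      simp only [Set.mem_preimage, Set.mem_setOf_eq, hudef]
      show (∀ i < K, y (σ i) ∈ t n i) ↔ ∀ i < K, y i ∈ t n (σ⁻¹ i)
      constructor
      · intro h
        refine (permIff fun j => y j ∈ t n (σ⁻¹ j)).1 fun i hi => ?_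
        rw [Equiv.Perm.inv_apply_self]
        exact h i hi
      · intro h i hi
        have := (permIff fun j => y j ∈ t n (σ⁻¹ j)).2 h i hi
        rwa [Equiv.Perm.inv_apply_self] at this
    -- padding the products
    have hpadκ : ∫⁻ ω, ∏ n ∈ Finset.range N, ((M ω).map Tσ) (c n) ∂P
        = ∫⁻ ω, ∏ n ∈ Finset.range K, M ω {y | ∀ i < K, y i ∈ u n i} ∂P := by
      refine lintegral_congr fun ω => ?_
      haveI := hM_prob ω
      rw [← Finset.prod_range_mul_prod_Ico _ hNK]
      have h2 : ∏ n ∈ Finset.Ico N K, M ω {y | ∀ i < K, y i ∈ u n i} = 1 :=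
        Finset.prod_eq_one fun n hn => by
          rw [Fuuniv n (Finset.mem_Ico.1 hn).1]; exact measure_univ
      rw [h2, mul_one]
      refine Finset.prod_congr rfl fun n hn => ?_
      rw [Measure.map_apply hTσ (hc_meas n), ← Ft n (Finset.mem_range.1 hn), Fu n]
    have hpadη : ∫⁻ ω, ∏ n ∈ Finset.range N, M ω (c n) ∂P
        = ∫⁻ ω, ∏ n ∈ Finset.range K, M ω {y | ∀ i < K, y i ∈ t n i} ∂P := by
      refine lintegral_congr fun ω => ?_
      haveI := hM_prob ω
      rw [← Finset.prod_range_mul_prod_Ico _ hNK]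
      have h2 : ∏ n ∈ Finset.Ico N K, M ω {y | ∀ i < K, y i ∈ t n i} = 1 :=
        Finset.prod_eq_one fun n hn => by
          rw [Ftuniv n (Finset.mem_Ico.1 hn).1]; exact measure_univ
      rw [h2, mul_one]
      exact Finset.prod_congr rfl fun n hn => by rw [Ft n (Finset.mem_range.1 hn)]
    -- row exchangeability
    have hY : Measurable (fun ω => fun i n => X ω (σ⁻¹ i) ((1 : Equiv.Perm ℕ) n)) := by
      refine measurable_pi_lambda _ fun i => measurable_pi_lambda _ fun n => ?_
      exact (measurable_pi_apply _).comp ((measurable_pi_apply _).comp hX)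
    set TU : Set (ℕ → ℕ → A) := {z | ∀ n < K, ∀ i < K, z i n ∈ u n i} with hTUdef
    have hTU : MeasurableSet TU := by
      have : TU = ⋂ (n : ℕ) (_ : n < K) (i : ℕ) (_ : i < K),
          (fun z : ℕ → ℕ → A => z i n) ⁻¹' u n i := by
        ext z; simp [hTUdef]
      rw [this]
      exact MeasurableSet.iInter fun n => MeasurableSet.iInter fun _ =>
        MeasurableSet.iInter fun i => MeasurableSet.iInter fun _ =>
          ((measurable_pi_apply _).comp (measurable_pi_apply _)) (hum n i)
    have hmap := hRCE σ⁻¹ 1 (ERMAux.finitelySupported_inv hσ) ERMAux.finitelySupported_one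
    have hmap' : P ((fun ω => fun i n => X ω (σ⁻¹ i) ((1 : Equiv.Perm ℕ) n)) ⁻¹' TU)
        = P (X ⁻¹' TU) := by
      rw [← Measure.map_apply hY hTU, ← Measure.map_apply hX hTU, hmap]
    have hYpre : (fun ω => fun i n => X ω (σ⁻¹ i) ((1 : Equiv.Perm ℕ) n)) ⁻¹' TU
        = {ω | ∀ n < K, ∀ i < K, X ω i n ∈ t n i} := by
      ext ω
      simp only [Set.mem_preimage, hTUdef, Set.mem_setOf_eq, Equiv.Perm.coe_one, id_eq]
      refine forall₂_congr fun n hn => ?_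
      exact permIff' fun j => X ω j n ∈ t n j
    have hXpre : X ⁻¹' TU = {ω | ∀ n < K, ∀ i < K, X ω i n ∈ u n i} := rfl
    rw [hYpre, hXpre] at hmap'
    calc ∫⁻ ω, ∏ n ∈ Finset.range N, ((M ω).map Tσ) (c n) ∂P
        = ∫⁻ ω, ∏ n ∈ Finset.range K, M ω {y | ∀ i < K, y i ∈ u n i} ∂P := hpadκ
      _ = P {ω | ∀ n < K, ∀ i < K, X ω i n ∈ u n i} := (hdirect K u hum).symm
      _ = P {ω | ∀ n < K, ∀ i < K, X ω i n ∈ t n i} := hmap'.symm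
      _ = ∫⁻ ω, ∏ n ∈ Finset.range K, M ω {y | ∀ i < K, y i ∈ t n i} ∂P := hdirect K t htm
      _ = ∫⁻ ω, ∏ n ∈ Finset.range N, M ω (c n) ∂P := hpadη.symm
  -- conclude via the uniqueness of moments
  have hκ : Measurable fun ω => (M ω).map Tσ :=
    (Measure.measurable_map _ hTσ).comp hM_meas
  have hκp : ∀ ω, IsProbabilityMeasure ((M ω).map Tσ) := fun ω => by
    haveI := hM_prob ω
    exact Measure.isProbabilityMeasure_map hTσ.aemeasurable
  exact ERMAux.map_eq_of_moments P 𝒞 hcnt hpi huniv hgen _ M hκ hM_meas hκp hM_prob H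

end Main

end ERMAuxSection
end
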